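/- A semi-monoidal category possessing a unit object (I, α) (a cancellable pseudo-idempotent) admits the structure of a monoidal category in the classical sense, with unit I, left unitor λ and right unitor ρ induced by α. -/

import Mathlib

open CategoryTheory

universe v u

/-- A semi-monoidal category: a category with an associative tensor product (strictly
associative on objects, with the corresponding compatibility on morphisms), no unit assumed. -/
structure SemiMonoidalCategory (C : Type u) [Category.{v} C] where
  ten : C → C → C
  tHom : ∀ {X Y Z W : C}, (X ⟶ Y) → (Z ⟶ W) → (ten X Z ⟶ ten Y W)
  tHom_id : ∀ (X Z : C), tHom (𝟙 X) (𝟙 Z) = 𝟙 (ten X Z)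
  tHom_comp : ∀ {X₁ X₂ X₃ Y₁ Y₂ Y₃ : C} (f : X₁ ⟶ X₂) (f' : X₂ ⟶ X₃)
    (g : Y₁ ⟶ Y₂) (g' : Y₂ ⟶ Y₃),
    tHom (f ≫ f') (g ≫ g') = tHom f g ≫ tHom f' g'
  assoc : ∀ (X Y Z : C), ten (ten X Y) Z = ten X (ten Y Z)
  assoc_nat : ∀ {X X' Y Y' Z Z' : C} (f : X ⟶ X') (g : Y ⟶ Y') (h : Z ⟶ Z'),
    tHom (tHom f g) h =
      eqToHom (assoc X Y Z) ≫ tHom f (tHom g h) ≫ eqToHom (assoc X' Y' Z').symm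

namespace SemiMonoidalCategory

variable {C : Type u} [Category.{v} C] (M : SemiMonoidalCategory C)

/-- An object is cancellable if tensoring with it on either side is a fully faithful
endofunctor, i.e. bijective on hom-sets. -/
def CancellableObj (I : C) : Prop :=
  (∀ X Y : C, Function.Bijective fun f : X ⟶ Y => M.tHom (𝟙 I) f) ∧
  (∀ X Y : C, Function.Bijective fun f : X ⟶ Y => M.tHom f (𝟙 I))

/-- A unit object is a cancellable pseudo-idempotent: `α : I ⊗ I ≅ I` an isomorphism with `I`
cancellable. -/
def IsUnitObj (I : C) (α : M.ten I I ⟶ I) : Prop :=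
  M.CancellableObj I ∧ IsIso α

/-- Tensoring with `I` on the left, as an endofunctor. -/
def lTensor (I : C) : C ⥤ C where
  obj X := M.ten I X
  map f := M.tHom (𝟙 I) f
  map_id X := M.tHom_id I X
  map_comp {X Y Z} f g := by
    have := M.tHom_comp (𝟙 I) (𝟙 I) f g
    simpa using this

/-- Tensoring with `I` on the right, as an endofunctor. -/
def rTensor (I : C) : C ⥤ C where
  obj X := M.ten X I
  map f := M.tHom f (𝟙 I)
  map_id X := M.tHom_id X I
  map_comp {X Y Z} f g := by
    have := M.tHom_comp f g (𝟙 I) (𝟙 I)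
    simpa using this

-- auxiliary development
lemma tHom_split {X Y Z W : C} (f : X ⟶ Y) (g : Z ⟶ W) :
    M.tHom f g = M.tHom f (𝟙 Z) ≫ M.tHom (𝟙 Y) g := by
  rw [← M.tHom_comp]; simp

lemma tHom_split' {X Y Z W : C} (f : X ⟶ Y) (g : Z ⟶ W) :
    M.tHom f g = M.tHom (𝟙 X) g ≫ M.tHom f (𝟙 W) := by
  rw [← M.tHom_comp]; simp

lemma tHom_eqToHom_l {X Y : C} (e : X = Y) (Z : C) :
    M.tHom (eqToHom e) (𝟙 Z) = eqToHom (congrArg (fun W => M.ten W Z) e) := by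
  subst e; simp [M.tHom_id]

lemma tHom_eqToHom_r (Z : C) {X Y : C} (e : X = Y) :
    M.tHom (𝟙 Z) (eqToHom e) = eqToHom (congrArg (fun W => M.ten Z W) e) := by
  subst e; simp [M.tHom_id]

lemma tHom_isIso {X Y Z W : C} (f : X ⟶ Y) (g : Z ⟶ W) [IsIso f] [IsIso g] :
    IsIso (M.tHom f g) :=
  ⟨M.tHom (inv f) (inv g), by rw [← M.tHom_comp]; simp [M.tHom_id],
    by rw [← M.tHom_comp]; simp [M.tHom_id]⟩

section Unit

variable {I : C} {α : M.ten I I ⟶ I} (h : M.IsUnitObj I α)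

include h

lemma lcancel {X Y : C} {f g : X ⟶ Y} (e : M.tHom (𝟙 I) f = M.tHom (𝟙 I) g) : f = g :=
  (h.1.1 X Y).injective e

lemma rcancel {X Y : C} {f g : X ⟶ Y} (e : M.tHom f (𝟙 I) = M.tHom g (𝟙 I)) : f = g :=
  (h.1.2 X Y).injective e

noncomputable def lun (X : C) : M.ten I X ⟶ X :=
  ((h.1.1 (M.ten I X) X).surjective
    (eqToHom (M.assoc I I X).symm ≫ M.tHom α (𝟙 X))).choose

lemma lun_spec (X : C) :
    M.tHom (𝟙 I) (M.lun h X) = eqToHom (M.assoc I I X).symm ≫ M.tHom α (𝟙 X) :=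
  ((h.1.1 (M.ten I X) X).surjective
    (eqToHom (M.assoc I I X).symm ≫ M.tHom α (𝟙 X))).choose_spec

noncomputable def run (X : C) : M.ten X I ⟶ X :=
  ((h.1.2 (M.ten X I) X).surjective
    (eqToHom (M.assoc X I I) ≫ M.tHom (𝟙 X) α)).choose

lemma run_spec (X : C) :
    M.tHom (M.run h X) (𝟙 I) = eqToHom (M.assoc X I I) ≫ M.tHom (𝟙 X) α :=
  ((h.1.2 (M.ten X I) X).surjective
    (eqToHom (M.assoc X I I) ≫ M.tHom (𝟙 X) α)).choose_spec

lemma lreflect {X Y : C} (f : X ⟶ Y) (hf : IsIso (M.tHom (𝟙 I) f)) : IsIso f := by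
  obtain ⟨g, hg⟩ := (h.1.1 Y X).surjective (inv (M.tHom (𝟙 I) f))
  have hg' : M.tHom (𝟙 I) g = inv (M.tHom (𝟙 I) f) := hg
  refine ⟨g, M.lcancel h ?_, M.lcancel h ?_⟩ <;>
  · have e : ∀ {A B D : C} (a : A ⟶ B) (b : B ⟶ D),
        M.tHom (𝟙 I) (a ≫ b) = M.tHom (𝟙 I) a ≫ M.tHom (𝟙 I) b := by
      intro A B D a b; rw [← M.tHom_comp]; simp
    rw [e, hg', M.tHom_id]
    simp

lemma rreflect {X Y : C} (f : X ⟶ Y) (hf : IsIso (M.tHom f (𝟙 I))) : IsIso f := by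
  obtain ⟨g, hg⟩ := (h.1.2 Y X).surjective (inv (M.tHom f (𝟙 I)))
  have hg' : M.tHom g (𝟙 I) = inv (M.tHom f (𝟙 I)) := hg
  refine ⟨g, M.rcancel h ?_, M.rcancel h ?_⟩ <;>
  · have e : ∀ {A B D : C} (a : A ⟶ B) (b : B ⟶ D),
        M.tHom (a ≫ b) (𝟙 I) = M.tHom a (𝟙 I) ≫ M.tHom b (𝟙 I) := by
      intro A B D a b; rw [← M.tHom_comp]; simp
    rw [e, hg', M.tHom_id]
    simp

lemma lun_isIso (X : C) : IsIso (M.lun h X) := by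
  haveI := h.2
  apply M.lreflect h
  rw [M.lun_spec h]
  haveI := M.tHom_isIso α (𝟙 X)
  infer_instance

lemma run_isIso (X : C) : IsIso (M.run h X) := by
  haveI := h.2
  apply M.rreflect h
  rw [M.run_spec h]
  haveI := M.tHom_isIso (𝟙 X) α
  infer_instance

lemma lun_natural {X Y : C} (f : X ⟶ Y) :
    M.tHom (𝟙 I) f ≫ M.lun h Y = M.lun h X ≫ f := by
  apply M.lcancel h
  have e1 : M.tHom (𝟙 I) (M.tHom (𝟙 I) f ≫ M.lun h Y)
      = M.tHom (𝟙 I) (M.tHom (𝟙 I) f) ≫ M.tHom (𝟙 I) (M.lun h Y) := by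
    rw [← M.tHom_comp]; simp
  have e2 : M.tHom (𝟙 I) (M.tHom (𝟙 I) f)
      = eqToHom (M.assoc I I X).symm ≫ M.tHom (𝟙 (M.ten I I)) f
          ≫ eqToHom (M.assoc I I Y) := by
    have a := M.assoc_nat (𝟙 I) (𝟙 I) f
    rw [M.tHom_id] at a
    rw [a]; simp
  have e3 : M.tHom (𝟙 I) (M.lun h X ≫ f)
      = M.tHom (𝟙 I) (M.lun h X) ≫ M.tHom (𝟙 I) f := by
    rw [← M.tHom_comp]; simp
  rw [e1, e2, M.lun_spec h, e3, M.lun_spec h]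
  simp only [Category.assoc, eqToHom_trans, eqToHom_refl, Category.id_comp]
  congr 1
  simp only [eqToHom_trans_assoc, eqToHom_refl, Category.id_comp]
  rw [← M.tHom_comp, ← M.tHom_comp]
  simp

lemma run_natural {X Y : C} (f : X ⟶ Y) :
    M.tHom f (𝟙 I) ≫ M.run h Y = M.run h X ≫ f := by
  apply M.rcancel h
  have e1 : M.tHom (M.tHom f (𝟙 I) ≫ M.run h Y) (𝟙 I)
      = M.tHom (M.tHom f (𝟙 I)) (𝟙 I) ≫ M.tHom (M.run h Y) (𝟙 I) := by
    rw [← M.tHom_comp]; simp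
  have e2 : M.tHom (M.tHom f (𝟙 I)) (𝟙 I)
      = eqToHom (M.assoc X I I) ≫ M.tHom f (𝟙 (M.ten I I))
          ≫ eqToHom (M.assoc Y I I).symm := by
    have a := M.assoc_nat f (𝟙 I) (𝟙 I)
    rw [M.tHom_id] at a
    rw [a]
  have e3 : M.tHom (M.run h X ≫ f) (𝟙 I)
      = M.tHom (M.run h X) (𝟙 I) ≫ M.tHom f (𝟙 I) := by
    rw [← M.tHom_comp]; simp
  rw [e1, e2, M.run_spec h, e3, M.run_spec h]
  simp only [Category.assoc, eqToHom_trans, eqToHom_refl, Category.id_comp]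
  congr 1
  simp only [eqToHom_trans_assoc, eqToHom_refl, Category.id_comp]
  rw [← M.tHom_comp, ← M.tHom_comp]
  simp

lemma triangle_aux (X Y : C) :
    M.tHom (𝟙 X) (M.lun h Y) =
      eqToHom (M.assoc X I Y).symm ≫ M.tHom (M.run h X) (𝟙 Y) := by
  haveI := h.2
  haveI : IsIso (M.tHom α (𝟙 Y)) := M.tHom_isIso α (𝟙 Y)
  haveI hAiso : IsIso (M.tHom (𝟙 X) (M.tHom α (𝟙 Y))) :=
    M.tHom_isIso (𝟙 X) (M.tHom α (𝟙 Y))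
  set A : M.ten X (M.ten (M.ten I I) Y) ⟶ M.ten X (M.ten I Y) :=
    M.tHom (𝟙 X) (M.tHom α (𝟙 Y)) with hAdef
  have E : M.ten (M.ten X I) (M.ten I Y) = M.ten X (M.ten (M.ten I I) Y) :=
    (M.assoc X I (M.ten I Y)).trans (congrArg (M.ten X) (M.assoc I I Y).symm)
  -- left side of the interchange identity
  have hA : M.tHom (M.run h X) (𝟙 (M.ten I Y)) = eqToHom E ≫ A := by
    have a1 := M.assoc_nat (M.run h X) (𝟙 I) (𝟙 Y)
    rw [M.tHom_id] at a1
    have a1' : M.tHom (M.run h X) (𝟙 (M.ten I Y))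
        = eqToHom (M.assoc (M.ten X I) I Y).symm ≫
            M.tHom (M.tHom (M.run h X) (𝟙 I)) (𝟙 Y) ≫ eqToHom (M.assoc X I Y) := by
      rw [a1]; simp
    rw [a1', M.run_spec h]
    have split : M.tHom (eqToHom (M.assoc X I I) ≫ M.tHom (𝟙 X) α) (𝟙 Y)
        = M.tHom (eqToHom (M.assoc X I I)) (𝟙 Y) ≫ M.tHom (M.tHom (𝟙 X) α) (𝟙 Y) := by
      rw [← M.tHom_comp]; simp
    rw [split, M.tHom_eqToHom_l, M.assoc_nat (𝟙 X) α (𝟙 Y)]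
    simp [hAdef, eqToHom_trans]
  have hB : M.tHom (𝟙 (M.ten X I)) (M.lun h Y)
      = eqToHom E ≫ A ≫ eqToHom (M.assoc X I Y).symm := by
    have b1 := M.assoc_nat (𝟙 X) (𝟙 I) (M.lun h Y)
    rw [M.tHom_id] at b1
    rw [b1, M.lun_spec h]
    have split : M.tHom (𝟙 X) (eqToHom (M.assoc I I Y).symm ≫ M.tHom α (𝟙 Y))
        = M.tHom (𝟙 X) (eqToHom (M.assoc I I Y).symm) ≫ M.tHom (𝟙 X) (M.tHom α (𝟙 Y)) := by
      rw [← M.tHom_comp]; simp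
    rw [split, M.tHom_eqToHom_r]
    simp [hAdef, eqToHom_trans]
  have E1 : M.tHom (M.run h X) (𝟙 (M.ten I Y)) ≫ M.tHom (𝟙 X) (M.lun h Y)
      = M.tHom (𝟙 (M.ten X I)) (M.lun h Y) ≫ M.tHom (M.run h X) (𝟙 Y) := by
    rw [← M.tHom_comp, ← M.tHom_comp]; simp
  rw [hA, hB] at E1
  simp only [Category.assoc] at E1
  have E2 := (cancel_epi (eqToHom E)).mp E1
  exact (cancel_epi A).mp E2

noncomputable def mkMonoidal : MonoidalCategory C where
  tensorObj := M.ten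
  whiskerLeft := fun X {_ _} f => M.tHom (𝟙 X) f
  whiskerRight := fun f Y => M.tHom f (𝟙 Y)
  tensorHom := M.tHom
  tensorUnit := I
  associator X Y Z := eqToIso (M.assoc X Y Z)
  leftUnitor X := @asIso _ _ _ _ (M.lun h X) (M.lun_isIso h X)
  rightUnitor X := @asIso _ _ _ _ (M.run h X) (M.run_isIso h X)
  tensorHom_def f g := M.tHom_split f g
  id_tensorHom_id := M.tHom_id
  tensorHom_comp_tensorHom f₁ f₂ g₁ g₂ := (M.tHom_comp f₁ g₁ f₂ g₂).symm
  whiskerLeft_id X Y := M.tHom_id X Y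
  id_whiskerRight X Y := M.tHom_id X Y
  associator_naturality f₁ f₂ f₃ := by
    simp only [eqToIso.hom]
    rw [M.assoc_nat]
    simp
  leftUnitor_naturality f := by simpa [asIso_hom] using M.lun_natural h f
  rightUnitor_naturality f := by simpa [asIso_hom] using M.run_natural h f
  pentagon W X Y Z := by
    simp only [eqToIso.hom, M.tHom_eqToHom_l, M.tHom_eqToHom_r, eqToHom_trans]
  triangle X Y := by
    simp only [eqToIso.hom, asIso_hom]
    rw [M.triangle_aux h]
    simp

end Unit

end SemiMonoidalCategory

open CategoryTheory SemiMonoidalCategory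

/-- A semi-monoidal category possessing a unit object `(I, α)` (a cancellable
pseudo-idempotent) admits the structure of a monoidal category in the classical sense, with
the same tensor product, unit object `I`, and left and right unitors induced by `α`
(characterized by `I ⊗ λ_X = α ⊗ X` and `ρ_X ⊗ I = X ⊗ α`, modulo associators). -/
theorem semiMonoidal_with_unit_is_monoidal
    {C : Type*} [Category C] (M : SemiMonoidalCategory C)
    {I : C} {α : M.ten I I ⟶ I} (h : M.IsUnitObj I α) :
    ∃ (mc : MonoidalCategory C) (hten : mc.tensorObj = M.ten)
      (hunit : mc.tensorUnit = I),
      HEq (@MonoidalCategoryStruct.tensorHom C _ mc.toMonoidalCategoryStruct)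
          (@SemiMonoidalCategory.tHom C _ M) ∧
      (∀ X : C,
        M.tHom (𝟙 I)
            (eqToHom (show M.ten I X = mc.tensorObj mc.tensorUnit X by rw [hten, hunit]) ≫
              (mc.leftUnitor X).hom) =
          eqToHom (M.assoc I I X).symm ≫ M.tHom α (𝟙 X)) ∧
      (∀ X : C,
        M.tHom
            (eqToHom (show M.ten X I = mc.tensorObj X mc.tensorUnit by rw [hten, hunit]) ≫
              (mc.rightUnitor X).hom)
            (𝟙 I) =
          eqToHom (M.assoc X I I) ≫ M.tHom (𝟙 X) α) := by
  refine ⟨M.mkMonoidal h, rfl, rfl, HEq.rfl, fun X => ?_, fun X => ?_⟩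
  · convert M.lun_spec h X using 2
    exact Category.id_comp _
  · convert M.run_spec h X using 2
    exact Category.id_comp _
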